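/- Quantitative stability of the Hilbert inner product (upper bound): Let H be a real inner product space, let ε ∈ (0,1), and let n ≥ 2 be an integer. Suppose x_1,…,x_n and y_1,…,y_n are vectors in H with ‖x_i‖ ≤ 1 and ‖y_i‖ ≤ 1 for all i, and such that ⟪x_i, y_j⟫ − ⟪x_j, y_i⟫ ≥ ε for all 1 ≤ i < j ≤ n. Then log n ≤ π/ε + 1; in particular n ≤ exp(π/ε + 1). -/

import Mathlib

open RealInnerProductSpace Real

section Aux

open intervalIntegral Finset

private lemma weight_cos' (k : ℝ) (h0 : k ≠ 0) (hc : Real.cos (k * (2*π)) = 1)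
    (hs : Real.sin (k * (2*π)) = 0) :
    ∫ θ in (0:ℝ)..(2*π), (2*π - θ) * Real.cos (k*θ) = 0 := by
  have hD : ∀ θ ∈ Set.uIcc (0:ℝ) (2*π),
      HasDerivAt (fun t => (2*π - t) * Real.sin (k*t)/k - Real.cos (k*t)/k^2)
        ((2*π - θ) * Real.cos (k*θ)) θ := by
    intro θ _
    have h1 : HasDerivAt (fun t : ℝ => k * t) k θ := by
      simpa using (hasDerivAt_id θ).const_mul k
    have hsin : HasDerivAt (fun t => Real.sin (k*t)) (Real.cos (k*θ) * k) θ :=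
      (Real.hasDerivAt_sin (k*θ)).comp θ h1
    have hcos : HasDerivAt (fun t => Real.cos (k*t)) (-Real.sin (k*θ) * k) θ :=
      (Real.hasDerivAt_cos (k*θ)).comp θ h1
    have hlin : HasDerivAt (fun t : ℝ => 2*π - t) (-1) θ := by
      simpa using (hasDerivAt_id θ).const_sub (2*π)
    have := ((hlin.mul hsin).div_const k).sub (hcos.div_const (k^2))
    refine this.congr_deriv ?_
    field_simp
    ring
  rw [integral_eq_sub_of_hasDerivAt hD (by apply Continuous.intervalIntegrable; continuity)]
  simp [hs, hc, mul_zero, Real.sin_zero, Real.cos_zero]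

private lemma weight_sin' (k : ℝ) (h0 : k ≠ 0) (hc : Real.cos (k * (2*π)) = 1)
    (hs : Real.sin (k * (2*π)) = 0) :
    ∫ θ in (0:ℝ)..(2*π), (2*π - θ) * Real.sin (k*θ) = 2*π/k := by
  have hD : ∀ θ ∈ Set.uIcc (0:ℝ) (2*π),
      HasDerivAt (fun t => -((2*π - t) * Real.cos (k*t))/k - Real.sin (k*t)/k^2)
        ((2*π - θ) * Real.sin (k*θ)) θ := by
    intro θ _
    have h1 : HasDerivAt (fun t : ℝ => k * t) k θ := by
      simpa using (hasDerivAt_id θ).const_mul k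
    have hsin : HasDerivAt (fun t => Real.sin (k*t)) (Real.cos (k*θ) * k) θ :=
      (Real.hasDerivAt_sin (k*θ)).comp θ h1
    have hcos : HasDerivAt (fun t => Real.cos (k*t)) (-Real.sin (k*θ) * k) θ :=
      (Real.hasDerivAt_cos (k*θ)).comp θ h1
    have hlin : HasDerivAt (fun t : ℝ => 2*π - t) (-1) θ := by
      simpa using (hasDerivAt_id θ).const_sub (2*π)
    have := (((hlin.mul hcos).neg).div_const k).sub (hsin.div_const (k^2))
    refine this.congr_deriv ?_
    field_simp
    ring
  rw [integral_eq_sub_of_hasDerivAt hD (by apply Continuous.intervalIntegrable; continuity)]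
  simp [hs, hc, mul_zero, Real.sin_zero, Real.cos_zero]
  ring

private lemma integral_weight_const' : ∫ θ in (0:ℝ)..(2*π), (2*π - θ) = 2*π^2 := by
  rw [intervalIntegral.integral_sub intervalIntegrable_const
    (Continuous.intervalIntegrable (by continuity) _ _)]
  simp [integral_id]
  ring

private lemma term_integral (k Av Bv : ℝ)
    (hcase : k = 0 ∨ (k ≠ 0 ∧ Real.cos (k*(2*π)) = 1 ∧ Real.sin (k*(2*π)) = 0)) :
    ∫ θ in (0:ℝ)..(2*π), (2*π - θ) * (Real.cos (k*θ) * Av - Real.sin (k*θ) * Bv)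
      = (if k = 0 then 2*π^2*Av else -(2*π/k) * Bv) := by
  have hsplit : ∀ θ : ℝ, (2*π - θ) * (Real.cos (k*θ) * Av - Real.sin (k*θ) * Bv)
      = Av * ((2*π - θ) * Real.cos (k*θ)) - Bv * ((2*π - θ) * Real.sin (k*θ)) := by
    intro θ; ring
  simp_rw [hsplit]
  rw [intervalIntegral.integral_sub ((Continuous.intervalIntegrable (by continuity) _ _))
      ((Continuous.intervalIntegrable (by continuity) _ _)),
    intervalIntegral.integral_const_mul, intervalIntegral.integral_const_mul]
  rcases hcase with h0 | ⟨h0, hc, hs⟩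
  · simp only [h0, if_pos rfl, zero_mul, Real.cos_zero, Real.sin_zero, mul_one, mul_zero]
    rw [integral_weight_const']
    simp
    ring
  · rw [weight_cos' k h0 hc hs, weight_sin' k h0 hc hs, if_neg h0]
    ring

private lemma expandF {H : Type*} [NormedAddCommGroup H] [InnerProductSpace ℝ H]
    (n : ℕ) (x y : Fin n → H) (θ : ℝ) :
    ‖∑ j : Fin n, (Real.cos (j*θ) • x j - Real.sin (j*θ) • y j)‖^2
      + ‖∑ j : Fin n, (Real.sin (j*θ) • x j + Real.cos (j*θ) • y j)‖^2
    = ∑ i : Fin n, ∑ j : Fin n,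
        (Real.cos (((j:ℝ)-(i:ℝ))*θ) * (⟪x i, x j⟫ + ⟪y i, y j⟫)
          - Real.sin (((j:ℝ)-(i:ℝ))*θ) * (⟪x i, y j⟫ - ⟪x j, y i⟫)) := by
  rw [← real_inner_self_eq_norm_sq, ← real_inner_self_eq_norm_sq, inner_sum, inner_sum]
  simp_rw [sum_inner, ← Finset.sum_add_distrib]
  refine Finset.sum_congr rfl fun i _ => Finset.sum_congr rfl fun j _ => ?_
  rw [sub_mul, Real.cos_sub, Real.sin_sub]
  simp only [inner_sub_left, inner_sub_right, inner_add_left, inner_add_right,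
    real_inner_smul_left, real_inner_smul_right]
  rw [real_inner_comm (x j) (x i), real_inner_comm (y j) (y i), real_inner_comm (y j) (x i),
    real_inner_comm (y i) (x j)]
  ring

private noncomputable def harmR (m : ℕ) : ℝ := ∑ k ∈ Finset.range m, (1:ℝ)/(k+1)

private lemma harmR_succ (m : ℕ) : harmR (m+1) = harmR m + 1/(m+1) := by
  simp [harmR, Finset.sum_range_succ]

private lemma log_le_harmR (m : ℕ) : Real.log (m+1) ≤ harmR m := by
  induction m with
  | zero => simp [harmR]
  | succ m ih =>
    rw [harmR_succ]
    have h1 : Real.log ((m:ℝ)+1+1) - Real.log ((m:ℝ)+1) ≤ 1/((m:ℝ)+1) := by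
      rw [← Real.log_div (by positivity) (by positivity)]
      have := Real.log_le_sub_one_of_pos (x := ((m:ℝ)+1+1)/((m:ℝ)+1)) (by positivity)
      have h2 : ((m:ℝ)+1+1)/((m:ℝ)+1) - 1 = 1/((m:ℝ)+1) := by field_simp; ring
      linarith
    push_cast
    linarith

private lemma sum_harmR (m : ℕ) :
    ∑ j ∈ Finset.range (m+1), harmR j = (m+1) * harmR m - m := by
  induction m with
  | zero => simp [harmR]
  | succ m ih =>
    rw [Finset.sum_range_succ, ih, harmR_succ]
    push_cast
    field_simp
    ring

private lemma row_sum (n a : ℕ) (ha : a < n) :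
    ∑ b ∈ Finset.range n, (if a = b then (0:ℝ) else 1/|(b:ℝ)-(a:ℝ)|)
      = harmR a + harmR (n-1-a) := by
  rw [← Finset.sum_range_add_sum_Ico _ (Nat.succ_le_of_lt ha), Finset.sum_range_succ, if_pos rfl,
    add_zero]
  congr 1
  · rw [← Finset.sum_range_reflect (fun b => if a = b then (0:ℝ) else 1/|(b:ℝ)-(a:ℝ)|) a, harmR]
    refine Finset.sum_congr rfl fun b hb => ?_
    rw [Finset.mem_range] at hb
    have hcast : ((a - 1 - b : ℕ) : ℝ) = (a:ℝ) - 1 - b := by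
      have h1 : (a - 1 - b : ℕ) = a - (1 + b) := by omega
      rw [h1, Nat.cast_sub (by omega)]
      push_cast; ring
    rw [if_neg (by omega), hcast, abs_of_neg (by linarith [Nat.cast_nonneg (α := ℝ) b])]
    congr 1
    ring
  · rw [Finset.sum_Ico_eq_sum_range]
    have h2 : n - (a+1) = n - 1 - a := by omega
    rw [h2, harmR]
    refine Finset.sum_congr rfl fun k _ => ?_
    rw [if_neg (by omega)]
    congr 1
    rw [abs_of_pos]
    · push_cast; ring
    · push_cast; linarith [Nat.cast_nonneg (α := ℝ) k]

private lemma total_sum (n : ℕ) (hn : 1 ≤ n) :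
    ∑ i : Fin n, ∑ j : Fin n, (if i = j then (0:ℝ) else 1/|((j:ℕ):ℝ)-((i:ℕ):ℝ)|)
      = 2*((n:ℝ) * harmR (n-1) - ((n:ℝ)-1)) := by
  have row : ∀ i : Fin n,
      (∑ j : Fin n, (if i = j then (0:ℝ) else 1/|((j:ℕ):ℝ)-((i:ℕ):ℝ)|))
        = harmR (i:ℕ) + harmR (n-1-(i:ℕ)) := by
    intro i
    have hcongr : ∀ j : Fin n, (if i = j then (0:ℝ) else 1/|((j:ℕ):ℝ)-((i:ℕ):ℝ)|)
        = (fun b : ℕ => if (i:ℕ) = b then (0:ℝ) else 1/|(b:ℝ)-((i:ℕ):ℝ)|) (j:ℕ) := by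
      intro j
      simp [Fin.ext_iff]
    calc ∑ j : Fin n, (if i = j then (0:ℝ) else 1/|((j:ℕ):ℝ)-((i:ℕ):ℝ)|)
        = ∑ j : Fin n,
            (fun b : ℕ => if (i:ℕ) = b then (0:ℝ) else 1/|(b:ℝ)-((i:ℕ):ℝ)|) (j:ℕ) :=
          Finset.sum_congr rfl (fun j _ => hcongr j)
      _ = ∑ b ∈ Finset.range n,
            (if (i:ℕ) = b then (0:ℝ) else 1/|(b:ℝ)-((i:ℕ):ℝ)|) :=
          Fin.sum_univ_eq_sum_range
            (fun b : ℕ => if (i:ℕ) = b then (0:ℝ) else 1/|(b:ℝ)-((i:ℕ):ℝ)|) n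
      _ = harmR (i:ℕ) + harmR (n-1-(i:ℕ)) := row_sum n (i:ℕ) i.isLt
  have e1 : ∑ i : Fin n, harmR (i:ℕ) = ∑ m ∈ Finset.range n, harmR m :=
    Fin.sum_univ_eq_sum_range (fun m => harmR m) n
  have e2 : ∑ i : Fin n, harmR (n-1-(i:ℕ)) = ∑ m ∈ Finset.range n, harmR (n-1-m) :=
    Fin.sum_univ_eq_sum_range (fun m => harmR (n-1-m)) n
  have e3 : ∑ m ∈ Finset.range n, harmR (n-1-m) = ∑ m ∈ Finset.range n, harmR m :=
    Finset.sum_range_reflect (fun j => harmR j) n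
  rw [Finset.sum_congr rfl (fun i _ => row i), Finset.sum_add_distrib, e1, e2, e3]
  obtain ⟨m, rfl⟩ : ∃ m, n = m + 1 := ⟨n - 1, by omega⟩
  rw [sum_harmR m]
  simp only [Nat.add_sub_cancel]
  push_cast
  ring

end Aux

/-- Quantitative stability of the Hilbert inner product (upper bound). -/
theorem inner_product_stability_upper_bound
    {H : Type*} [NormedAddCommGroup H] [InnerProductSpace ℝ H]
    (ε : ℝ) (hε : ε ∈ Set.Ioo (0 : ℝ) 1) (n : ℕ) (hn : 2 ≤ n)
    (x y : Fin n → H)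
    (hx : ∀ i, ‖x i‖ ≤ 1) (hy : ∀ i, ‖y i‖ ≤ 1)
    (hhg : ∀ i j : Fin n, i < j → ε ≤ ⟪x i, y j⟫ - ⟪x j, y i⟫) :
    Real.log n ≤ π / ε + 1 := by
  obtain ⟨hε0, hε1⟩ := hε
  have hπ := Real.pi_pos
  have hn0 : (0:ℝ) < n := by positivity
  set A : Fin n → Fin n → ℝ := fun i j => ⟪x i, x j⟫ + ⟪y i, y j⟫ with hA
  set B : Fin n → Fin n → ℝ := fun i j => ⟪x i, y j⟫ - ⟪x j, y i⟫ with hB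
  set G : Fin n × Fin n → ℝ → ℝ := fun p θ =>
    (2*π - θ) * (Real.cos (((p.2:ℝ)-(p.1:ℝ))*θ) * A p.1 p.2
      - Real.sin (((p.2:ℝ)-(p.1:ℝ))*θ) * B p.1 p.2) with hG
  have hGcont : ∀ p : Fin n × Fin n, Continuous (G p) := by
    intro p
    rw [hG]
    exact (continuous_const.sub continuous_id).mul
      (((Real.continuous_cos.comp (continuous_const.mul continuous_id)).mul
          continuous_const).sub
        ((Real.continuous_sin.comp (continuous_const.mul continuous_id)).mul continuous_const))
  -- step 1: the integral of the sum is nonnegative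
  have h1 : 0 ≤ ∫ θ in (0:ℝ)..(2*π), ∑ p : Fin n × Fin n, G p θ := by
    apply intervalIntegral.integral_nonneg (by linarith)
    intro θ hθ
    have hsum : ∑ p : Fin n × Fin n, G p θ
        = (2*π - θ) * (‖∑ j : Fin n, (Real.cos (j*θ) • x j - Real.sin (j*θ) • y j)‖^2
          + ‖∑ j : Fin n, (Real.sin (j*θ) • x j + Real.cos (j*θ) • y j)‖^2) := by
      rw [expandF n x y θ, Fintype.sum_prod_type, Finset.mul_sum]
      refine Finset.sum_congr rfl fun i _ => ?_
      rw [Finset.mul_sum]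
    rw [hsum]
    have : 0 ≤ 2*π - θ := by linarith [hθ.2]
    positivity
  -- step 2: evaluate the integral
  have h2 : ∫ θ in (0:ℝ)..(2*π), ∑ p : Fin n × Fin n, G p θ
      = ∑ p : Fin n × Fin n, (if p.1 = p.2 then 2*π^2 * A p.1 p.2
          else -(2*π/(((p.2:ℕ):ℝ)-((p.1:ℕ):ℝ))) * B p.1 p.2) := by
    rw [intervalIntegral.integral_finset_sum
      (fun p _ => (hGcont p).intervalIntegrable _ _)]
    refine Finset.sum_congr rfl fun p _ => ?_
    rcases eq_or_ne p.1 p.2 with he | he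
    · have hk : ((p.2:ℕ):ℝ) - ((p.1:ℕ):ℝ) = 0 := by rw [he]; ring
      rw [hG]
      simp only
      rw [term_integral _ _ _ (Or.inl hk), if_pos hk, if_pos he]
    · have hk : ((p.2:ℕ):ℝ) - ((p.1:ℕ):ℝ) ≠ 0 := by
        intro h
        apply he
        have : ((p.1:ℕ):ℝ) = ((p.2:ℕ):ℝ) := by linarith
        exact Fin.ext (by exact_mod_cast this)
      have hint : (((p.2:ℕ):ℝ) - ((p.1:ℕ):ℝ)) = (((p.2:ℕ):ℤ) - ((p.1:ℕ):ℤ) : ℤ) := by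
        push_cast; ring
      have hc : Real.cos ((((p.2:ℕ):ℝ) - ((p.1:ℕ):ℝ)) * (2*π)) = 1 := by
        rw [hint, Real.cos_int_mul_two_pi]
      have hs : Real.sin ((((p.2:ℕ):ℝ) - ((p.1:ℕ):ℝ)) * (2*π)) = 0 := by
        rw [hint]
        have : ((((p.2:ℕ):ℤ) - ((p.1:ℕ):ℤ) : ℤ) : ℝ) * (2*π)
            = ((2*(((p.2:ℕ):ℤ) - ((p.1:ℕ):ℤ)) : ℤ) : ℝ) * π := by push_cast; ring
        rw [this, Real.sin_int_mul_pi]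
      rw [hG]
      simp only
      rw [term_integral _ _ _ (Or.inr ⟨hk, hc, hs⟩), if_neg hk, if_neg he]
  -- step 3: termwise upper bound
  have h3 : ∀ p : Fin n × Fin n,
      (if p.1 = p.2 then 2*π^2 * A p.1 p.2
        else -(2*π/(((p.2:ℕ):ℝ)-((p.1:ℕ):ℝ))) * B p.1 p.2)
      ≤ (if p.1 = p.2 then (4*π^2:ℝ) else 0)
          - 2*π*ε * (if p.1 = p.2 then (0:ℝ) else 1/|((p.2:ℕ):ℝ)-((p.1:ℕ):ℝ)|) := by
    intro ⟨i, j⟩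
    rcases eq_or_ne i j with he | he
    · simp only [if_pos he]
      have hAle : A i j ≤ 2 := by
        rw [hA]
        subst he
        simp only
        rw [real_inner_self_eq_norm_sq, real_inner_self_eq_norm_sq]
        nlinarith [hx i, hy i, norm_nonneg (x i), norm_nonneg (y i)]
      nlinarith [sq_nonneg π]
    · simp only [if_neg he]
      rcases lt_or_gt_of_ne he with hlt | hlt
    -- i < j
      · have hd : (0:ℝ) < ((j:ℕ):ℝ) - ((i:ℕ):ℝ) := by
          have : (i:ℕ) < (j:ℕ) := hlt
          have := Nat.cast_lt (α := ℝ) |>.mpr this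
          linarith
        have hBe : ε ≤ B i j := hhg i j hlt
        rw [abs_of_pos hd]
        have hcoef : -(2*π/(((j:ℕ):ℝ)-((i:ℕ):ℝ))) ≤ 0 := by
          apply neg_nonpos_of_nonneg
          positivity
        calc -(2*π/(((j:ℕ):ℝ)-((i:ℕ):ℝ))) * B i j
            ≤ -(2*π/(((j:ℕ):ℝ)-((i:ℕ):ℝ))) * ε := by
              exact mul_le_mul_of_nonpos_left hBe hcoef
          _ = 0 - 2*π*ε * (1/(((j:ℕ):ℝ)-((i:ℕ):ℝ))) := by ring
    -- j < i
      · have hd : ((j:ℕ):ℝ) - ((i:ℕ):ℝ) < 0 := by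
          have : (j:ℕ) < (i:ℕ) := hlt
          have := Nat.cast_lt (α := ℝ) |>.mpr this
          linarith
        have hBe : B i j ≤ -ε := by
          have h' := hhg j i hlt
          have hBd : B i j = ⟪x i, y j⟫ - ⟪x j, y i⟫ := rfl
          rw [hBd]
          linarith
        rw [abs_of_neg hd]
        have hcoef : 0 ≤ -(2*π/(((j:ℕ):ℝ)-((i:ℕ):ℝ))) := by
          rw [neg_nonneg]
          apply div_nonpos_of_nonneg_of_nonpos (by positivity) hd.le
        calc -(2*π/(((j:ℕ):ℝ)-((i:ℕ):ℝ))) * B i j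
            ≤ -(2*π/(((j:ℕ):ℝ)-((i:ℕ):ℝ))) * (-ε) := mul_le_mul_of_nonneg_left hBe hcoef
          _ = 0 - 2*π*ε * (1/(-(((j:ℕ):ℝ)-((i:ℕ):ℝ)))) := by
              rw [div_neg]
              ring
  -- step 4: combine
  have h4 : 0 ≤ ∑ p : Fin n × Fin n, ((if p.1 = p.2 then (4*π^2:ℝ) else 0)
      - 2*π*ε * (if p.1 = p.2 then (0:ℝ) else 1/|((p.2:ℕ):ℝ)-((p.1:ℕ):ℝ)|)) := by
    rw [h2] at h1
    exact le_trans h1 (Finset.sum_le_sum fun p _ => h3 p)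
  have hdiag : ∑ p : Fin n × Fin n, (if p.1 = p.2 then (4*π^2:ℝ) else 0)
      = (n:ℝ) * (4*π^2) := by
    rw [Fintype.sum_prod_type]
    have hrow : ∀ i : Fin n, ∑ j : Fin n, (if i = j then (4*π^2:ℝ) else 0) = 4*π^2 := by
      intro i; rw [Finset.sum_ite_eq]; simp
    rw [Finset.sum_congr rfl fun i _ => hrow i, Finset.sum_const, Finset.card_univ,
      Fintype.card_fin, nsmul_eq_mul]
  have hoff : ∑ p : Fin n × Fin n,
      (if p.1 = p.2 then (0:ℝ) else 1/|((p.2:ℕ):ℝ)-((p.1:ℕ):ℝ)|)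
      = 2*((n:ℝ) * harmR (n-1) - ((n:ℝ)-1)) := by
    rw [Fintype.sum_prod_type]
    exact total_sum n (by omega)
  rw [Finset.sum_sub_distrib, ← Finset.mul_sum, hdiag, hoff] at h4
  -- step 5: numerics
  have hlog : Real.log n ≤ harmR (n-1) := by
    have hlh := log_le_harmR (n-1)
    have hcast : ((n-1:ℕ):ℝ) + 1 = (n:ℝ) := by
      rw [Nat.cast_sub (by omega)]; push_cast; ring
    rwa [hcast] at hlh
  set h := harmR (n-1) with hh
  clear_value h
  clear h1 h2 h3 hdiag hoff hhg hx hy hGcont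
  have k1 : ε * ((n:ℝ)*h - ((n:ℝ)-1)) ≤ π * (n:ℝ) := by nlinarith [h4, hπ, hε0]
  have k2 : ε * (h - 1) * (n:ℝ) ≤ π * (n:ℝ) := by nlinarith [k1, hε0]
  have k3 : ε * (h - 1) ≤ π := le_of_mul_le_mul_right (by linarith) hn0
  have k4 : h - 1 ≤ π / ε := by
    rw [le_div_iff₀ hε0]
    linarith [k3]
  linarith
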